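/- Let (ξ, J) be a Levi flat structure on L with defining couple (γ, X), α ∈ Z¹(L) satisfying the Maurer–Cartan equation, and [·,·]_α the deformed bracket [V,W]_α = [V,W] + (α ∧ T)(V,W). Then the Nijenhuis tensor of J with respect to [·,·]_α satisfies N_J^α = −4 α_J^{0,1} ∧ H, where H(V) = ½(T(V) + J T(JV)) and α^{0,1}(V) = ½(α(V) + i α(JV)), i.e. for sections V, W of ξ: N_J^α(V,W) = −2( α(V) HW − α(W) HV + α(JV) JHW − α(JW) JHV ). -/
import Mathlib


/-- With the deformed bracket [V,W]_α = [V,W] + α(V)T(W) − α(W)T(V),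
T(V) = [V,X] − γ([V,X])X, H(V) = ½(T(V) + J T(JV)) and N_J = 0 on ξ, the Nijenhuis
tensor of J with respect to [·,·]_α satisfies, for sections V, W of ξ:
N_J^α(V,W) = −2( α(V) HW − α(W) HV + α(JV) JHW − α(JW) JHV ). -/
theorem stmt_16 {R : Type*} [CommRing R] [Algebra ℝ R]
    {g : Type*} [AddCommGroup g] [Module ℝ g] [Module R g] [IsScalarTower ℝ R g]
    (bracket : g → g → g)
    (γ α : g →ₗ[R] R) (X : g) (hX : γ X = 1) (hαX : α X = 0)
    (J : g →ₗ[R] g)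
    (hJ2 : ∀ v, γ v = 0 → J (J v) = -v)
    (hJξ : ∀ v, γ v = 0 → γ (J v) = 0)
    (T : g → g) (hT : ∀ v, T v = bracket v X - γ (bracket v X) • X)
    (H : g → g) (hH : ∀ v, H v = (2 : ℝ)⁻¹ • (T v + J (T (J v))))
    (bracketα : g → g → g)
    (hbα : ∀ v w, bracketα v w = bracket v w + α v • T w - α w • T v)
    -- vanishing of the Nijenhuis tensor of J for the Lie bracket [·,·]
    (hN : ∀ v w, γ v = 0 → γ w = 0 →
        bracket (J v) (J w) - bracket v w - J (bracket (J v) w) - J (bracket v (J w)) = 0)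
    (V W : g) (hV : γ V = 0) (hW : γ W = 0) :
    bracketα (J V) (J W) - bracketα V W - J (bracketα (J V) W) - J (bracketα V (J W))
      = (-2 : ℝ) • (α V • H W - α W • H V + α (J V) • J (H W) - α (J W) • J (H V)) := by
  have hγT : ∀ v, γ (T v) = 0 := by
    intro v; rw [hT]; simp [hX]
  have hJT : ∀ v, J (J (T v)) = - T v := fun v => hJ2 _ (hγT v)
  have hNVW := hN V W hV hW
  have h2 : (algebraMap ℝ R) 2 * (algebraMap ℝ R) 2⁻¹ = 1 := by
    rw [← map_mul]; norm_num
  simp only [hbα, hH, map_add, map_sub, map_smul, LinearMap.map_smul_of_tower, hJT,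
    smul_neg, smul_sub, smul_add]
  linear_combination (norm := match_scalars <;>
    first
      | ring1
      | linear_combination α V * h2
      | linear_combination (-(α V)) * h2
      | linear_combination α W * h2
      | linear_combination (-(α W)) * h2
      | linear_combination α (J V) * h2
      | linear_combination (-(α (J V))) * h2
      | linear_combination α (J W) * h2
      | linear_combination (-(α (J W))) * h2) hNVW
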